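/- Let n ≥ 2 and S ⊆ ℤ^n. Then S is closed under some majority operation if and only if there exists a majority operation g : ℤ³ → ℤ such that S = ⋈_{1≤i<j≤n} cl_g(π_{i,j}(S)). -/
import Mathlib


/-- Componentwise closedness of a set of `ι`-indexed integer vectors under a
`k`-ary operation `f : ℤ^k → ℤ`. -/
def CptClosed {k : ℕ} {ι : Type*} (f : (Fin k → ℤ) → ℤ) (S : Set (ι → ℤ)) : Prop :=
  ∀ x : Fin k → ι → ℤ, (∀ l, x l ∈ S) → (fun i => f (fun l => x l i)) ∈ S

/-- `f : ℤ³ → ℤ` is a majority operation. -/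
def IsMajorityOp (f : (Fin 3 → ℤ) → ℤ) : Prop :=
  ∀ a b : ℤ, f ![a, a, b] = a ∧ f ![a, b, a] = a ∧ f ![b, a, a] = a

/-- `S` is closed under some majority operation. -/
def MajClosed {ι : Type*} (S : Set (ι → ℤ)) : Prop :=
  ∃ f : (Fin 3 → ℤ) → ℤ, IsMajorityOp f ∧ CptClosed f S

/-- The projection `π_{i,j}(x) = (x_i, x_j)`. -/
def proj2 {n : ℕ} (i j : Fin n) (x : Fin n → ℤ) : Fin 2 → ℤ := ![x i, x j]

/-- The projection `π_{i,j}(S)`. -/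
def projSet {n : ℕ} (i j : Fin n) (S : Set (Fin n → ℤ)) : Set (Fin 2 → ℤ) :=
  proj2 i j '' S

/-- The join `⋈_{1 ≤ i < j ≤ n} F i j`. -/
def joinPairs {n : ℕ} (F : Fin n → Fin n → Set (Fin 2 → ℤ)) : Set (Fin n → ℤ) :=
  {x | ∀ i j : Fin n, i < j → proj2 i j x ∈ F i j}

/-- The `f`-closure of `S`: the intersection of all `f`-closed supersets of `S`. -/
def clOp {k m : ℕ} (f : (Fin k → ℤ) → ℤ) (S : Set (Fin m → ℤ)) : Set (Fin m → ℤ) :=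
  ⋂₀ {T | S ⊆ T ∧ CptClosed f T}

/-- The directed discrete midpoint operation `μ`. -/
def muOp : (Fin 2 → ℤ) → ℤ := fun t =>
  if t 1 ≤ t 0 then ⌈((t 0 + t 1 : ℤ) : ℚ) / 2⌉ else ⌊((t 0 + t 1 : ℤ) : ℚ) / 2⌋

/-- The operation `g(x,y) = ⌈(x+y)/2⌉`. -/
def ceilAvgOp : (Fin 2 → ℤ) → ℤ := fun t => ⌈((t 0 + t 1 : ℤ) : ℚ) / 2⌉

/-- The operation `h(x,y) = ⌊(x+y)/2⌋`. -/
def floorAvgOp : (Fin 2 → ℤ) → ℤ := fun t => ⌊((t 0 + t 1 : ℤ) : ℚ) / 2⌋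

/-- The median operation on three integers. -/
def medianOp : (Fin 3 → ℤ) → ℤ := fun t =>
  max (max (min (t 0) (t 1)) (min (t 1) (t 2))) (min (t 0) (t 2))

/-- The canonical embedding `ℤ^m → ℝ^m`. -/
def toR {m : ℕ} (z : Fin m → ℤ) : Fin m → ℝ := fun l => (z l : ℝ)

/-- The integer neighborhood `N(x)` of a real vector `x`. -/
def intNbhd {m : ℕ} (x : Fin m → ℝ) : Set (Fin m → ℤ) :=
  {z | ∀ j, |(z j : ℝ) - x j| < 1}

/-- `S` is midpoint-neighbor-closed: for all `x, y ∈ S`, `N((x+y)/2) ⊆ S`. -/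
def MidpointNeighborClosed {m : ℕ} (S : Set (Fin m → ℤ)) : Prop :=
  ∀ x ∈ S, ∀ y ∈ S, ∀ z : Fin m → ℤ,
    (∀ j, |(z j : ℝ) - ((x j : ℝ) + (y j : ℝ)) / 2| < 1) → z ∈ S

/-- `S ⊆ ℤ^m` is integrally convex. -/
def IntegrallyConvex {m : ℕ} (S : Set (Fin m → ℤ)) : Prop :=
  ∀ x : Fin m → ℝ, x ∈ convexHull ℝ (toR '' S) →
    x ∈ convexHull ℝ (toR '' (S ∩ intNbhd x))

/-- The closed convex closure of `T ⊆ ℤ^m` inside `ℝ^m`: the intersection of all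
topologically closed convex sets containing `T`. -/
def closedConvexClosure {m : ℕ} (T : Set (Fin m → ℤ)) : Set (Fin m → ℝ) :=
  ⋂₀ {C : Set (Fin m → ℝ) | Convex ℝ C ∧ IsClosed C ∧ toR '' T ⊆ C}

/-- `S = cl_conv̄(S) ∩ ℤ^m`. -/
def ClosedConvexIntegral {m : ℕ} (S : Set (Fin m → ℤ)) : Prop :=
  S = {z : Fin m → ℤ | toR z ∈ closedConvexClosure S}

/-- All entries of `A` lie in `{0, -1, +1}`. -/
def UnitMatrix {mR n : ℕ} (A : Matrix (Fin mR) (Fin n) ℤ) : Prop :=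
  ∀ i j, A i j = 0 ∨ A i j = -1 ∨ A i j = 1

/-- Each row of `A` has at most `c` nonzero entries. -/
def RowSupportLE {mR n : ℕ} (A : Matrix (Fin mR) (Fin n) ℤ) (c : ℕ) : Prop :=
  ∀ i, {j | A i j ≠ 0}.ncard ≤ c

/-- `S` is representable by a UTVPI system. -/
def RepUTVPI {n : ℕ} (S : Set (Fin n → ℤ)) : Prop :=
  ∃ (mR : ℕ) (A : Matrix (Fin mR) (Fin n) ℤ) (b : Fin mR → ℝ),
    UnitMatrix A ∧ RowSupportLE A 2 ∧
    S = {x | ∀ i, b i ≤ ((∑ j, A i j * x j : ℤ) : ℝ)}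

/-- `S` is representable by an SVPI system. -/
def RepSVPI {n : ℕ} (S : Set (Fin n → ℤ)) : Prop :=
  ∃ (mR : ℕ) (A : Matrix (Fin mR) (Fin n) ℤ) (b : Fin mR → ℝ),
    UnitMatrix A ∧ RowSupportLE A 1 ∧
    S = {x | ∀ i, b i ≤ ((∑ j, A i j * x j : ℤ) : ℝ)}

/-- `S` is representable by a DC system. -/
def RepDC {n : ℕ} (S : Set (Fin n → ℤ)) : Prop :=
  ∃ (mR : ℕ) (A : Matrix (Fin mR) (Fin n) ℤ) (b : Fin mR → ℝ),
    UnitMatrix A ∧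
    (∀ i, {j | A i j = 1}.ncard ≤ 1) ∧ (∀ i, {j | A i j = -1}.ncard ≤ 1) ∧
    S = {x | ∀ i, b i ≤ ((∑ j, A i j * x j : ℤ) : ℝ)}

/-- `S` is representable by a TVPI system with possibly infinitely many inequalities. -/
def RepTVPIInf {n : ℕ} (S : Set (Fin n → ℤ)) : Prop :=
  ∃ (I : Type) (a1 a2 b : I → ℝ) (p q : I → Fin n),
    S = {x | ∀ i : I, b i ≤ a1 i * (x (p i) : ℝ) + a2 i * (x (q i) : ℝ)}

/-- `S` is 2-decomposable: `S = ⋈_{i<j} π_{i,j}(S)`. -/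
def TwoDecomposable {ι : Type*} [LinearOrder ι] (S : Set (ι → ℤ)) : Prop :=
  S = {x | ∀ i j : ι, i < j → ∃ s ∈ S, s i = x i ∧ s j = x j}

lemma cptClosed_clOp' {k m : ℕ} (f : (Fin k → ℤ) → ℤ) (S : Set (Fin m → ℤ)) :
    CptClosed f (clOp f S) :=
  fun x hx T hT => hT.2 x (fun l => hx l T hT)

lemma clOp_eq_self' {k m : ℕ} {f : (Fin k → ℤ) → ℤ} {S : Set (Fin m → ℤ)}
    (h : CptClosed f S) : clOp f S = S := by
  apply subset_antisymm
  · exact Set.sInter_subset_of_mem ⟨Set.Subset.rfl, h⟩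
  · intro x hx T hT
    exact hT.1 hx

lemma cptClosed_projSet' {n k : ℕ} {f : (Fin k → ℤ) → ℤ} {S : Set (Fin n → ℤ)}
    (h : CptClosed f S) (i j : Fin n) : CptClosed f (projSet i j S) := by
  intro x hx
  choose s hs hps using hx
  refine ⟨fun idx => f (fun l => s l idx), h s hs, ?_⟩
  funext i2
  fin_cases i2
  · show f (fun l => s l i) = f (fun l => x l 0)
    congr 1
    funext l
    exact congrFun (hps l) 0
  · show f (fun l => s l j) = f (fun l => x l 1)
    congr 1
    funext l
    exact congrFun (hps l) 1

lemma cptClosed_joinPairs' {n k : ℕ} {f : (Fin k → ℤ) → ℤ}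
    (F : Fin n → Fin n → Set (Fin 2 → ℤ))
    (h : ∀ i j : Fin n, i < j → CptClosed f (F i j)) :
    CptClosed f (joinPairs F) := by
  intro x hx i j hij
  have key : (proj2 i j fun idx => f fun l => x l idx)
      = fun i2 => f (fun l => proj2 i j (x l) i2) := by
    funext i2
    fin_cases i2 <;> rfl
  show proj2 i j (fun idx => f fun l => x l idx) ∈ F i j
  rw [key]
  exact h i j hij (fun l => proj2 i j (x l)) (fun l => hx l i j hij)

lemma bakerPixley' {n : ℕ} {f : (Fin 3 → ℤ) → ℤ} (hf : IsMajorityOp f)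
    {S : Set (Fin n → ℤ)} (hS : CptClosed f S) (hn : 2 ≤ n) (x : Fin n → ℤ)
    (hx : ∀ i j : Fin n, i < j → ∃ s ∈ S, s i = x i ∧ s j = x j) : x ∈ S := by
  have key : ∀ m, 2 ≤ m → ∀ I : Finset (Fin n), I.card = m →
      ∃ s ∈ S, ∀ i ∈ I, s i = x i := by
    intro m hm
    induction m, hm using Nat.le_induction with
    | base =>
      intro I hI
      obtain ⟨i, j, hij, rfl⟩ := Finset.card_eq_two.mp hI
      rcases hij.lt_or_gt with h | h
      · obtain ⟨s, hsS, h1, h2⟩ := hx i j h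
        refine ⟨s, hsS, fun a ha => ?_⟩
        rcases Finset.mem_insert.mp ha with rfl | ha
        · exact h1
        · rw [Finset.mem_singleton.mp ha]; exact h2
      · obtain ⟨s, hsS, h1, h2⟩ := hx j i h
        refine ⟨s, hsS, fun a ha => ?_⟩
        rcases Finset.mem_insert.mp ha with rfl | ha
        · exact h2
        · rw [Finset.mem_singleton.mp ha]; exact h1
    | succ m hm ih =>
      intro I hI
      obtain ⟨a, ha⟩ := Finset.card_pos.mp (by omega : 0 < I.card)
      have hIa : (I.erase a).card = m := by
        rw [Finset.card_erase_of_mem ha]; omega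
      obtain ⟨b, hb⟩ := Finset.card_pos.mp (by omega : 0 < (I.erase a).card)
      have hbI : b ∈ I := Finset.mem_of_mem_erase hb
      have hba : b ≠ a := Finset.ne_of_mem_erase hb
      obtain ⟨c, hc⟩ := Finset.card_pos.mp (show 0 < ((I.erase a).erase b).card by
        rw [Finset.card_erase_of_mem hb, hIa]; omega)
      have hcI : c ∈ I := Finset.mem_of_mem_erase (Finset.mem_of_mem_erase hc)
      have hcb : c ≠ b := Finset.ne_of_mem_erase hc
      have hca : c ≠ a := Finset.ne_of_mem_erase (Finset.mem_of_mem_erase hc)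
      have hIb : (I.erase b).card = m := by
        rw [Finset.card_erase_of_mem hbI]; omega
      have hIc : (I.erase c).card = m := by
        rw [Finset.card_erase_of_mem hcI]; omega
      obtain ⟨s1, hs1S, hs1⟩ := ih (I.erase a) hIa
      obtain ⟨s2, hs2S, hs2⟩ := ih (I.erase b) hIb
      obtain ⟨s3, hs3S, hs3⟩ := ih (I.erase c) hIc
      refine ⟨fun idx => f ![s1 idx, s2 idx, s3 idx], ?_, ?_⟩
      · have hfun : (fun i => f (fun l => ![s1, s2, s3] l i))
            = (fun idx => f ![s1 idx, s2 idx, s3 idx]) := by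
          funext i
          congr 1
          funext l
          fin_cases l <;> rfl
        have := hS ![s1, s2, s3] (by intro l; fin_cases l <;> assumption)
        rwa [hfun] at this
      · intro i hi
        have h1 : i ≠ a → s1 i = x i :=
          fun h => hs1 i (Finset.mem_erase.mpr ⟨h, hi⟩)
        have h2 : i ≠ b → s2 i = x i :=
          fun h => hs2 i (Finset.mem_erase.mpr ⟨h, hi⟩)
        have h3 : i ≠ c → s3 i = x i :=
          fun h => hs3 i (Finset.mem_erase.mpr ⟨h, hi⟩)
        show f ![s1 i, s2 i, s3 i] = x i
        by_cases hia : i = a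
        · rw [h2 (by rw [hia]; exact hba.symm), h3 (by rw [hia]; exact hca.symm)]
          exact (hf (x i) (s1 i)).2.2
        · by_cases hib : i = b
          · rw [h1 hia, h3 (by rw [hib]; exact hcb.symm)]
            exact (hf (x i) (s2 i)).2.1
          · rw [h1 hia, h2 hib]
            exact (hf (x i) (s3 i)).1
  obtain ⟨s, hsS, hs⟩ := key n hn Finset.univ (by simp)
  have hsx : s = x := funext fun i => hs i (Finset.mem_univ i)
  exact hsx ▸ hsS

/-- `S` is closed under some majority operation iff
`S = ⋈_{i<j} cl_g(π_{i,j}(S))` for some majority operation `g`. -/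
theorem stmt_11 {n : ℕ} (hn : 2 ≤ n) (S : Set (Fin n → ℤ)) :
    MajClosed S ↔
      ∃ g : (Fin 3 → ℤ) → ℤ, IsMajorityOp g ∧
        S = joinPairs (fun i j => clOp g (projSet i j S)) := by
  constructor
  · rintro ⟨f, hf, hS⟩
    refine ⟨f, hf, ?_⟩
    have hcl : ∀ i j : Fin n, clOp f (projSet i j S) = projSet i j S :=
      fun i j => clOp_eq_self' (cptClosed_projSet' hS i j)
    ext x
    constructor
    · intro hxS i j hij
      show proj2 i j x ∈ clOp f (projSet i j S)
      rw [hcl]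
      exact ⟨x, hxS, rfl⟩
    · intro hx
      apply bakerPixley' hf hS hn x
      intro i j hij
      have h : proj2 i j x ∈ clOp f (projSet i j S) := hx i j hij
      rw [hcl] at h
      obtain ⟨s, hsS, hps⟩ := h
      exact ⟨s, hsS, congrFun hps 0, congrFun hps 1⟩
  · rintro ⟨g, hg, hS⟩
    refine ⟨g, hg, ?_⟩
    rw [hS]
    exact cptClosed_joinPairs' _ (fun i j _ => cptClosed_clOp' g _)
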